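/- Let M, r be positive integers with 1 ≤ r < M/2, and let p = r/M. Then the partial binomial sum satisfies ∑_{l=1}^{r} C(M,l) ≤ C(M,r)/(1-2p). -/

import Mathlib

theorem partial_binomial_sum_le (M r : ℕ) (hr : 1 ≤ r) (hrM : (r : ℝ) < M / 2)
    (p : ℝ) (hp : p = (r : ℝ) / M) :
    (∑ l ∈ Finset.Icc 1 r, (M.choose l : ℝ)) ≤ (M.choose r : ℝ) / (1 - 2 * p) := by
  have hM : 2 * r < M := by
    by_contra h
    push_neg at h
    have : (M : ℝ) ≤ 2 * r := by exact_mod_cast h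
    linarith
  have hMr : (r : ℝ) < (M : ℝ) - r := by
    have : ((2 * r : ℕ) : ℝ) < M := by exact_mod_cast hM
    push_cast at this; linarith
  have hr0 : (0 : ℝ) ≤ r := Nat.cast_nonneg r
  have hMrpos : (0 : ℝ) < (M : ℝ) - r := by linarith
  have hMpos : (0 : ℝ) < M := by linarith
  set q : ℝ := r / ((M : ℝ) - r) with hq
  have hq0 : 0 ≤ q := div_nonneg hr0 hMrpos.le
  have hq1 : q < 1 := (div_lt_one hMrpos).2 hMr
  -- key ratio step
  have key : ∀ l, 1 ≤ l → l ≤ r → (M.choose (l - 1) : ℝ) ≤ q * M.choose l := by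
    intro l hl1 hlr
    obtain ⟨k, rfl⟩ : ∃ k, l = k + 1 := ⟨l - 1, (Nat.succ_pred_eq_of_pos hl1).symm⟩
    have hid : M.choose (k + 1) * (k + 1) = M.choose k * (M - k) := Nat.choose_succ_right_eq M k
    have hkM : k < M := by omega
    have hidR : (M.choose (k + 1) : ℝ) * (k + 1) = (M.choose k : ℝ) * ((M : ℝ) - k) := by
      have := congrArg (fun n : ℕ => (n : ℝ)) hid
      push_cast [Nat.cast_sub hkM.le] at this
      linarith [this]
    have hMk : (0 : ℝ) < (M : ℝ) - k := by
      have : (k : ℝ) < M := by exact_mod_cast hkM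
      linarith
    simp only [Nat.add_sub_cancel]
    rw [hq, div_mul_eq_mul_div, le_div_iff₀ hMrpos]
    -- goal: choose k * (M - r) ≤ r * choose (k+1)
    have hkr : (k : ℝ) + 1 ≤ r := by exact_mod_cast hlr
    have h1 : (M.choose k : ℝ) * ((M : ℝ) - r) ≤ (M.choose k : ℝ) * ((M : ℝ) - k) := by
      apply mul_le_mul_of_nonneg_left _ (Nat.cast_nonneg _)
      linarith
    have h2 : (M.choose k : ℝ) * ((M : ℝ) - k) = (M.choose (k + 1) : ℝ) * (k + 1) := hidR.symm
    have h3 : (M.choose (k + 1) : ℝ) * (k + 1) ≤ (r : ℝ) * M.choose (k + 1) := by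
      rw [mul_comm]
      apply mul_le_mul_of_nonneg_right hkr (Nat.cast_nonneg _)
    linarith
  -- induction: choose (r - k) ≤ q^k * choose r
  have ind : ∀ k, k ≤ r → (M.choose (r - k) : ℝ) ≤ q ^ k * M.choose r := by
    intro k
    induction k with
    | zero => intro _; simp
    | succ n ih =>
      intro hn
      have hn' : n ≤ r := by omega
      have h1 : 1 ≤ r - n := by omega
      have step := key (r - n) h1 (by omega)
      have : r - (n + 1) = r - n - 1 := by omega
      rw [this]
      calc (M.choose (r - n - 1) : ℝ) ≤ q * M.choose (r - n) := step
        _ ≤ q * (q ^ n * M.choose r) := by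
            apply mul_le_mul_of_nonneg_left (ih hn') hq0
        _ = q ^ (n + 1) * M.choose r := by ring
  -- reindex the sum
  have hsum : (∑ l ∈ Finset.Icc 1 r, (M.choose l : ℝ))
      = ∑ k ∈ Finset.range r, (M.choose (r - k) : ℝ) := by
    apply Finset.sum_nbij' (fun l => r - l) (fun k => r - k)
    · intro l hl; simp only [Finset.mem_Icc] at hl; simp only [Finset.mem_range]; omega
    · intro k hk; simp only [Finset.mem_range] at hk; simp only [Finset.mem_Icc]; omega
    · intro l hl; simp only [Finset.mem_Icc] at hl; omega
    · intro k hk; simp only [Finset.mem_range] at hk; omega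
    · intro l hl; simp only [Finset.mem_Icc] at hl; rw [Nat.sub_sub_self hl.2]
  have hgeom : (∑ k ∈ Finset.range r, q ^ k) ≤ 1 / (1 - q) := by
    have h1 : (0:ℝ) < 1 - q := by linarith
    rw [geom_sum_eq (ne_of_lt hq1), show (q ^ r - 1) / (q - 1) = (1 - q ^ r) / (1 - q) by
      rw [div_eq_div_iff (by linarith) (by linarith)]; ring]
    rw [div_le_div_iff₀ h1 h1]
    nlinarith [pow_nonneg hq0 r]
  have hchoose0 : (0 : ℝ) ≤ M.choose r := Nat.cast_nonneg _
  have hbound : (∑ l ∈ Finset.Icc 1 r, (M.choose l : ℝ)) ≤ (1 / (1 - q)) * M.choose r := by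
    rw [hsum]
    calc (∑ k ∈ Finset.range r, (M.choose (r - k) : ℝ))
        ≤ ∑ k ∈ Finset.range r, q ^ k * M.choose r := by
          apply Finset.sum_le_sum
          intro k hk
          exact ind k (le_of_lt (Finset.mem_range.mp hk))
      _ = (∑ k ∈ Finset.range r, q ^ k) * M.choose r := by rw [Finset.sum_mul]
      _ ≤ (1 / (1 - q)) * M.choose r := mul_le_mul_of_nonneg_right hgeom hchoose0
  refine hbound.trans ?_
  rw [show (M.choose r : ℝ) / (1 - 2 * p) = (1 / (1 - 2 * p)) * M.choose r by ring]
  apply mul_le_mul_of_nonneg_right _ hchoose0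
  have h1q : 1 - q = ((M : ℝ) - 2 * r) / ((M : ℝ) - r) := by
    rw [hq]; field_simp
    ring
  have h1p : 1 - 2 * p = ((M : ℝ) - 2 * r) / (M : ℝ) := by
    rw [hp]; field_simp
  have hM2r : (0 : ℝ) < (M : ℝ) - 2 * r := by linarith
  apply one_div_le_one_div_of_le
  · rw [h1p]; positivity
  · rw [h1p, h1q]
    apply div_le_div_of_nonneg_left hM2r.le hMrpos
    linarith
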